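/- Let n ≥ 3, m ≥ 3, G¹ ∈ {Pₙ, Cₙ}, G² ∈ {Pₘ, Cₘ}, and let S be a global defensive alliance of G¹ ∘ G². Denote by sᵢ the number of vertices of S in the i-th copy of G². If 2 ≤ i ≤ n−1 and 1 ≤ sᵢ < m, then s_{i−1} + s_{i+1} ≥ m. -/

import Mathlib

/-- Lexicographic product of simple graphs. -/
def lexProd {α β : Type*} (G : SimpleGraph α) (H : SimpleGraph β) :
    SimpleGraph (α × β) where
  Adj x y := G.Adj x.1 y.1 ∨ (x.1 = y.1 ∧ H.Adj x.2 y.2)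
  symm := by
    constructor
    rintro x y (h | ⟨h1, h2⟩)
    · exact Or.inl h.symm
    · exact Or.inr ⟨h1.symm, h2.symm⟩
  loopless := by
    constructor
    rintro x (h | ⟨_, h2⟩)
    · exact G.loopless.irrefl _ h
    · exact H.loopless.irrefl _ h2

/-- Closed neighborhood N[v]. -/
def closedNbhd {α : Type*} (G : SimpleGraph α) (v : α) : Set α :=
  insert v (G.neighborSet v)

/-- A defensive alliance: every vertex of S is defended. -/
def IsDefensiveAlliance {α : Type*} (G : SimpleGraph α) (S : Set α) : Prop :=
  ∀ v ∈ S, ((closedNbhd G v) \ S).ncard ≤ ((closedNbhd G v) ∩ S).ncard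

/-- A global defensive alliance: a defensive alliance which is also dominating. -/
def IsGDA {α : Type*} (G : SimpleGraph α) (S : Set α) : Prop :=
  IsDefensiveAlliance G S ∧ ∀ v, v ∈ S ∨ ∃ u ∈ S, G.Adj v u

/-- The global defensive alliance number. -/
noncomputable def gdaNumber {α : Type*} (G : SimpleGraph α) : ℕ :=
  sInf {k | ∃ S : Set α, IsGDA G S ∧ S.ncard = k}

/-- Number of vertices of S in the j-th copy of G² (copies indexed 1,…,n). -/
noncomputable def copyCount {n m : ℕ} (S : Set (Fin n × Fin m)) (j : ℕ) : ℕ :=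
  (S ∩ {p | (p.1 : ℕ) + 1 = j}).ncard


private lemma modh {n c : ℕ} (hc1 : 2 ≤ c) (hc2 : c < 2*n) : c % n = 1 ↔ c = n + 1 := by
  rcases Nat.lt_or_ge c n with h | h
  · rw [Nat.mod_eq_of_lt h]; omega
  · rw [Nat.mod_eq_sub_mod h, Nat.mod_eq_of_lt (by omega)]; omega

private lemma adj_int {n : ℕ} {G1 : SimpleGraph (Fin n)}
    (hG1 : G1 = SimpleGraph.pathGraph n ∨ G1 = SimpleGraph.cycleGraph n)
    {a : ℕ} (ha1 : 1 ≤ a) (ha2 : a + 2 ≤ n) (ha : a < n) (u : Fin n) :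
    G1.Adj ⟨a, ha⟩ u ↔ ((u:ℕ) = a - 1 ∨ (u:ℕ) = a + 1) := by
  have hu := u.isLt
  rcases hG1 with rfl | rfl
  · rw [SimpleGraph.pathGraph_adj]
    simp only [Fin.val_mk]
    omega
  · rw [SimpleGraph.cycleGraph_adj']
    rw [Fin.sub_def, Fin.sub_def]
    simp only [Fin.val_mk]
    rw [modh (by omega) (by omega), modh (by omega) (by omega)]
    omega

private lemma adj_nbr {m : ℕ} {G2 : SimpleGraph (Fin m)}
    (hG2 : G2 = SimpleGraph.pathGraph m ∨ G2 = SimpleGraph.cycleGraph m)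
    (hm : 3 ≤ m) (x z : Fin m) (h : G2.Adj x z) :
    (z:ℕ) = ((x:ℕ)+1) % m ∨ (z:ℕ) = ((x:ℕ)+(m-1)) % m := by
  have hx := x.isLt; have hz := z.isLt
  rcases hG2 with rfl | rfl
  · rw [SimpleGraph.pathGraph_adj] at h
    rcases h with h | h
    · left; rw [Nat.mod_eq_of_lt (by omega)]; omega
    · right; rw [Nat.mod_eq_sub_mod (by omega), Nat.mod_eq_of_lt (by omega)]; omega
  · rw [SimpleGraph.cycleGraph_adj'] at h
    rw [Fin.sub_def, Fin.sub_def] at h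
    simp only [Fin.val_mk] at h
    rcases h with h | h
    · right
      by_cases h0 : (x:ℕ) = 0 ∧ (z:ℕ) = m - 1
      · rw [Nat.mod_eq_of_lt (by omega)]; omega
      · rw [modh (by omega) (by omega)] at h
        rw [Nat.mod_eq_sub_mod (by omega), Nat.mod_eq_of_lt (by omega)]; omega
    · left
      by_cases h0 : (z:ℕ) = 0 ∧ (x:ℕ) = m - 1
      · rw [show (x:ℕ)+1 = m by omega, Nat.mod_self]; omega
      · rw [modh (by omega) (by omega)] at h
        rw [Nat.mod_eq_of_lt (by omega)]; omega

set_option maxHeartbeats 2000000 in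
theorem stmt_15 (n m : ℕ) (hn : 3 ≤ n) (hm : 3 ≤ m)
    (G1 : SimpleGraph (Fin n))
    (hG1 : G1 = SimpleGraph.pathGraph n ∨ G1 = SimpleGraph.cycleGraph n)
    (G2 : SimpleGraph (Fin m))
    (hG2 : G2 = SimpleGraph.pathGraph m ∨ G2 = SimpleGraph.cycleGraph m)
    (S : Set (Fin n × Fin m)) (hS : IsGDA (lexProd G1 G2) S) :
    ∀ i : ℕ, 2 ≤ i → i ≤ n - 1 → 1 ≤ copyCount S i → copyCount S i < m →
      m ≤ copyCount S (i - 1) + copyCount S (i + 1) := by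
  obtain ⟨hdef, -⟩ := hS
  intro i hi2 hin hs1 hs2
  obtain ⟨a, rfl⟩ : ∃ a, i = a + 1 := ⟨i - 1, by omega⟩
  have ha1 : 1 ≤ a := by omega
  have ha2 : a + 2 ≤ n := by omega
  set va : Fin n := ⟨a, by omega⟩ with hva
  set vp : Fin n := ⟨a - 1, by omega⟩ with hvp
  set vs : Fin n := ⟨a + 1, by omega⟩ with hvs
  have hvav : (va:ℕ) = a := rfl
  have hvpv : (vp:ℕ) = a - 1 := rfl
  have hvsv : (vs:ℕ) = a + 1 := rfl
  -- rewrite copyCount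
  have hcopy : ∀ (j : ℕ) (w : Fin n), (w:ℕ) + 1 = j →
      copyCount S j = (S ∩ {p | p.1 = w}).ncard := by
    intro j w hw
    unfold copyCount
    congr 1
    ext p
    simp only [Set.mem_inter_iff, Set.mem_setOf_eq, and_congr_right_iff]
    intro _
    constructor
    · intro h
      exact Fin.ext (by omega)
    · intro h
      rw [h]; exact hw
  have hsa : copyCount S (a+1) = (S ∩ {p | p.1 = va}).ncard := hcopy _ va rfl
  have hsp : copyCount S (a+1-1) = (S ∩ {p | p.1 = vp}).ncard := hcopy _ vp (by omega)
  have hss : copyCount S (a+1+1) = (S ∩ {p | p.1 = vs}).ncard := hcopy _ vs rfl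
  -- find a boundary edge in copy a
  rw [hsa] at hs1 hs2
  obtain ⟨p0, hp0S, hp0⟩ := Set.nonempty_of_ncard_ne_zero (s := S ∩ {p | p.1 = va}) (by omega)
  set A : Set (Fin m) := {z | (va, z) ∈ S} with hA
  have hx0 : p0.2 ∈ A := by
    show (va, p0.2) ∈ S
    rw [← hp0]; exact hp0S
  have himg : Prod.mk va '' A = S ∩ {p | p.1 = va} := by
    ext p
    constructor
    · rintro ⟨z, hz, rfl⟩; exact ⟨hz, rfl⟩
    · rintro ⟨hpS, hp1⟩
      refine ⟨p.2, ?_, ?_⟩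
      · show (va, p.2) ∈ S
        rw [← hp1]; exact hpS
      · rw [← hp1]
  have hinjva : Function.Injective (Prod.mk va : Fin m → Fin n × Fin m) := fun _ _ h => (Prod.ext_iff.mp h).2
  have hAcard : A.ncard = (S ∩ {p | p.1 = va}).ncard := by
    rw [← himg, Set.ncard_image_of_injective _ hinjva]
  obtain ⟨z0, hz0⟩ : ∃ z, z ∉ A := by
    by_contra hc; push_neg at hc
    rw [Set.eq_univ_of_forall hc, Set.ncard_univ, Nat.card_eq_fintype_card,
      Fintype.card_fin] at hAcard
    omega
  have hpre : G2.Preconnected := by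
    rcases hG2 with rfl | rfl
    exacts [SimpleGraph.pathGraph_preconnected m, SimpleGraph.cycleGraph_preconnected]
  obtain ⟨w⟩ := hpre p0.2 z0
  obtain ⟨d, -, hdA, hdnA⟩ := w.exists_boundary_dart A hx0 hz0
  set x : Fin m := d.fst with hxdef
  set y : Fin m := d.snd with hydef
  have hxS : (va, x) ∈ S := hdA
  have hyS : (va, y) ∉ S := hdnA
  have hxy : G2.Adj x y := d.adj
  -- the defense inequality at v = (va, x)
  set v : Fin n × Fin m := (va, x) with hv
  have hdefv := hdef v hxS
  set N : Set (Fin n × Fin m) := closedNbhd (lexProd G1 G2) v with hN0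
  set Cp : Set (Fin n × Fin m) := {p | p.1 = vp} with hCp0
  set Cs : Set (Fin n × Fin m) := {p | p.1 = vs} with hCs0
  set D : Set (Fin n × Fin m) := {p | p.1 = va ∧ p.2 ∈ closedNbhd G2 x} with hD0
  have hadjva := adj_int hG1 ha1 ha2 (by omega)
  have hNeq : N = Cp ∪ Cs ∪ D := by
    ext p
    simp only [hN0, closedNbhd, Set.mem_insert_iff, SimpleGraph.mem_neighborSet,
      Set.mem_union, Set.mem_setOf_eq, hCp0, hCs0, hD0]
    constructor
    · rintro (rfl | h)
      · right; exact ⟨rfl, Set.mem_insert _ _⟩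
      · rcases h with h1 | ⟨h1, h2⟩
        · rcases (hadjva p.1).mp h1 with h | h
          · exact Or.inl (Or.inl (Fin.ext h))
          · exact Or.inl (Or.inr (Fin.ext h))
        · exact Or.inr ⟨h1.symm, Set.mem_insert_of_mem _ h2⟩
    · rintro ((h | h) | ⟨h1, h2⟩)
      · exact Or.inr (Or.inl ((hadjva p.1).mpr (Or.inl (by rw [h]))))
      · exact Or.inr (Or.inl ((hadjva p.1).mpr (Or.inr (by rw [h]))))
      · rcases Set.mem_insert_iff.mp h2 with h2 | h2
        · left
          have : p = (p.1, p.2) := rfl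
          rw [this, h1, h2]
        · exact Or.inr (Or.inr ⟨h1.symm, h2⟩)
  -- disjointness
  have hnepv : vp ≠ vs := fun h => by
    have := congrArg Fin.val h; rw [hvpv, hvsv] at this; omega
  have hnepa : vp ≠ va := fun h => by
    have := congrArg Fin.val h; rw [hvpv, hvav] at this; omega
  have hnesa : vs ≠ va := fun h => by
    have := congrArg Fin.val h; rw [hvsv, hvav] at this; omega
  have dCpCs : Disjoint Cp Cs := by
    rw [Set.disjoint_left]
    rintro p h1 h2
    exact hnepv (h1.symm.trans h2)
  have dCpCsD : Disjoint (Cp ∪ Cs) D := by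
    rw [Set.disjoint_left]
    rintro p (h1 | h1) ⟨h2, -⟩
    · exact hnepa (h1.symm.trans h2)
    · exact hnesa (h1.symm.trans h2)
  -- cardinalities of full copies
  have hcard_copy : ∀ wv : Fin n, ({p : Fin n × Fin m | p.1 = wv}).ncard = m := by
    intro wv
    have : {p : Fin n × Fin m | p.1 = wv} = Prod.mk wv '' Set.univ := by
      ext p
      constructor
      · intro h
        exact ⟨p.2, trivial, by rw [← h]⟩
      · rintro ⟨z, -, rfl⟩; rfl
    rw [this, Set.ncard_image_of_injective _ (fun _ _ h => (Prod.ext_iff.mp h).2),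
      Set.ncard_univ, Nat.card_eq_fintype_card, Fintype.card_fin]
  have key : ∀ T : Set (Fin n × Fin m), T.ncard = m →
      (T \ S).ncard + (T ∩ S).ncard = m := by
    intro T hT
    have h1 : T ∩ S ⊆ T := Set.inter_subset_left
    have := Set.ncard_diff_add_ncard_of_subset h1 (Set.toFinite T)
    rwa [Set.diff_self_inter, hT] at this
  have keyp := key Cp (hcard_copy vp)
  have keys := key Cs (hcard_copy vs)
  -- bounds on D
  have hDout : 1 ≤ (D \ S).ncard := by
    have hmem : (va, y) ∈ D \ S :=
      ⟨⟨rfl, Set.mem_insert_of_mem _ hxy⟩, hyS⟩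
    have := (Set.ncard_pos (Set.toFinite _)).mpr ⟨_, hmem⟩
    omega
  have hDin : (D ∩ S).ncard ≤ 2 := by
    obtain ⟨q1, hq1⟩ : ∃ q : Fin m, (q:ℕ) = ((x:ℕ)+1) % m :=
      ⟨⟨((x:ℕ)+1) % m, Nat.mod_lt _ (by omega)⟩, rfl⟩
    obtain ⟨q2, hq2⟩ : ∃ q : Fin m, (q:ℕ) = ((x:ℕ)+(m-1)) % m :=
      ⟨⟨((x:ℕ)+(m-1)) % m, Nat.mod_lt _ (by omega)⟩, rfl⟩
    have hy12 : (va, y) ∈ ({v, (va,q1), (va,q2)} : Set (Fin n × Fin m)) := by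
      rcases adj_nbr hG2 hm x y hxy with h | h
      · right; left; rw [show y = q1 from Fin.ext (h.trans hq1.symm)]
      · right; right; rw [show y = q2 from Fin.ext (h.trans hq2.symm)]; exact rfl
    have hsub : D ∩ S ⊆ ({v, (va,q1), (va,q2)} : Set (Fin n × Fin m)) \ {(va, y)} := by
      rintro ⟨p1, p2⟩ ⟨⟨h1, h2⟩, hpS⟩
      simp only [Set.mem_setOf_eq] at h1
      subst h1
      refine ⟨?_, ?_⟩
      · rcases Set.mem_insert_iff.mp h2 with rfl | h2
        · exact Or.inl rfl
        · rcases adj_nbr hG2 hm x p2 h2 with h | h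
          · right; left; rw [show p2 = q1 from Fin.ext (h.trans hq1.symm)]
          · right; right; rw [show p2 = q2 from Fin.ext (h.trans hq2.symm)]; exact rfl
      · intro heq
        rw [Set.mem_singleton_iff] at heq
        exact hyS (heq ▸ hpS)
    have h3 : ({v, (va,q1), (va,q2)} : Set (Fin n × Fin m)).ncard ≤ 3 := by
      calc ({v, (va,q1), (va,q2)} : Set (Fin n × Fin m)).ncard
          ≤ ({(va,q1), (va,q2)} : Set (Fin n × Fin m)).ncard + 1 := Set.ncard_insert_le _ _
        _ ≤ (({(va,q2)} : Set (Fin n × Fin m)).ncard + 1) + 1 := by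
            have := Set.ncard_insert_le ((va,q1)) ({(va,q2)} : Set (Fin n × Fin m))
            omega
        _ ≤ 3 := by rw [Set.ncard_singleton]
    have hdiff := Set.ncard_diff_singleton_of_mem hy12
    have := Set.ncard_le_ncard hsub (Set.toFinite _)
    omega
  -- assemble
  have e1 : (N \ S).ncard = (Cp \ S).ncard + (Cs \ S).ncard + (D \ S).ncard := by
    rw [hNeq, Set.union_diff_distrib, Set.union_diff_distrib,
      Set.ncard_union_eq (Disjoint.mono (Set.union_subset_union Set.diff_subset Set.diff_subset) Set.diff_subset dCpCsD),
      Set.ncard_union_eq (Disjoint.mono Set.diff_subset Set.diff_subset dCpCs)]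
  have e2 : (N ∩ S).ncard = (Cp ∩ S).ncard + (Cs ∩ S).ncard + (D ∩ S).ncard := by
    rw [hNeq, Set.union_inter_distrib_right, Set.union_inter_distrib_right,
      Set.ncard_union_eq (Disjoint.mono (Set.union_subset_union Set.inter_subset_left Set.inter_subset_left) Set.inter_subset_left dCpCsD),
      Set.ncard_union_eq (Disjoint.mono Set.inter_subset_left Set.inter_subset_left dCpCs)]
  rw [hsp, hss, Set.inter_comm S Cp, Set.inter_comm S Cs]
  omega
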